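/- arXiv:1512.04513 — 2 statements merged into one kernel-verified Lean document; each statement's English description precedes it below -/
import Mathlib

section
/- Let n ≥ 1 and suppose B = {b_1 < b_2 < ... < b_{n+1}} is an (n+1)-element subset of {1, 2, ..., 2n+1} such that b_k ≥ 2k for some k with 1 ≤ k ≤ n+1. Then the columns of M_{2n} labeled by B, regarded as vectors in ℚ^{n+1} (the column labeled b having entries C(2n+1-i, 2n+2-b) - C(i, 2n+2-b) for i = 0,...,n), are linearly dependent. -/
open Polynomial

/-- The rational polynomial whose value at a natural number `N` is `N.choose c`. -/
noncomputable def chQ (c : ℕ) : ℚ[X] := Polynomial.C ((c.factorial : ℚ)⁻¹) * descPochhammer ℚ c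

lemma chQ_eval_nat (c N : ℕ) : (chQ c).eval (N : ℚ) = N.choose c := by
  simp only [chQ, eval_mul, eval_C, descPochhammer_eval_eq_descFactorial,
    Nat.descFactorial_eq_factorial_mul_choose]
  push_cast
  rw [← mul_assoc, inv_mul_cancel₀ (by exact_mod_cast c.factorial_ne_zero), one_mul]

lemma chQ_natDegree_le (c : ℕ) : (chQ c).natDegree ≤ c := by
  refine (natDegree_C_mul_le _ _).trans ?_
  simp [descPochhammer_natDegree]

/-- A basis for the antisymmetric polynomials about `K/2`. -/
noncomputable def wp (K : ℚ) (j : ℕ) : ℚ[X] := (C K - 2 * X) * (X * (C K - X)) ^ j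

lemma C_two' : (C 2 : ℚ[X]) = 2 := map_ofNat _ 2

lemma lin_eq (K : ℚ) : (C K - 2 * X : ℚ[X]) = C (-2) * X + C K := by
  rw [map_neg, C_two']; ring

lemma quad_eq (K : ℚ) : (X * (C K - X) : ℚ[X]) = C (-1) * X ^ 2 + C K * X + C 0 := by
  rw [map_neg, map_one, map_zero]; ring

lemma wp_comp (K : ℚ) (j : ℕ) : (wp K j).comp (C K - X) = -(wp K j) := by
  simp only [wp, mul_comp, sub_comp, pow_comp, C_comp, X_comp, ofNat_comp]
  ring

lemma lin_ne (K : ℚ) : C K - 2 * X ≠ 0 := by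
  intro hc
  have := natDegree_linear (a := (-2 : ℚ)) (b := K) (by norm_num)
  rw [← lin_eq, hc] at this; simp at this

lemma quad_ne (K : ℚ) : (X * (C K - X) : ℚ[X]) ≠ 0 := by
  intro hc
  have := natDegree_quadratic (a := (-1 : ℚ)) (b := K) (c := 0) (by norm_num)
  rw [← quad_eq, hc] at this; simp at this

lemma wp_natDegree (K : ℚ) (j : ℕ) : (wp K j).natDegree = 2 * j + 1 := by
  rw [wp, natDegree_mul (lin_ne K) (pow_ne_zero _ (quad_ne K)), natDegree_pow, lin_eq, quad_eq,
    natDegree_linear (by norm_num), natDegree_quadratic (by norm_num)]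
  ring

lemma wp_leadingCoeff (K : ℚ) (j : ℕ) : (wp K j).leadingCoeff = -2 * (-1) ^ j := by
  rw [wp, leadingCoeff_mul, leadingCoeff_pow, lin_eq, quad_eq,
    leadingCoeff_linear (by norm_num), leadingCoeff_quadratic (by norm_num)]

lemma wp_leadingCoeff_ne (K : ℚ) (j : ℕ) : (wp K j).leadingCoeff ≠ 0 := by
  rw [wp_leadingCoeff]
  intro h
  rcases Nat.even_or_odd j with h' | h' <;>
    simp [h'.neg_one_pow, Odd.neg_one_pow] at h

lemma CK_sub_X_eq (K : ℚ) : (C K - X : ℚ[X]) = -(X - C K) := by ring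

lemma nd_CK_sub_X (K : ℚ) : (C K - X : ℚ[X]).natDegree = 1 := by
  rw [CK_sub_X_eq, natDegree_neg, natDegree_X_sub_C]

lemma lc_CK_sub_X (K : ℚ) : (C K - X : ℚ[X]).leadingCoeff = -1 := by
  rw [CK_sub_X_eq, leadingCoeff_neg, leadingCoeff_X_sub_C]

/-- A nonzero polynomial antisymmetric under `x ↦ K - x` has odd degree. -/
lemma anti_odd (K : ℚ) (F : ℚ[X]) (hF : F ≠ 0) (hanti : F.comp (C K - X) = -F) :
    Odd F.natDegree := by
  have hlc : F.leadingCoeff ≠ 0 := leadingCoeff_ne_zero.mpr hF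
  have h2 := leadingCoeff_comp (p := F) (q := C K - X) (by rw [nd_CK_sub_X]; norm_num)
  rw [hanti, leadingCoeff_neg, lc_CK_sub_X] at h2
  rcases Nat.even_or_odd F.natDegree with h' | h'
  · rw [h'.neg_one_pow, mul_one] at h2
    exact absurd (by linarith [h2]) hlc
  · exact h'

/-- Any polynomial antisymmetric under `x ↦ K - x` of degree at most `2m`
lies in the span of `wp K 0, …, wp K (m-1)`. -/
theorem mem_span_wp (K : ℚ) (m : ℕ) :
    ∀ d : ℕ, ∀ F : ℚ[X], F.natDegree ≤ d → F.natDegree ≤ 2 * m →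
      F.comp (C K - X) = -F →
      F ∈ Submodule.span ℚ (Set.range fun j : Fin m => wp K j) := by
  intro d
  induction d with
  | zero =>
    intro F hd _ hanti
    have hFC : F = C (F.coeff 0) := eq_C_of_natDegree_le_zero hd
    have h1 : F = -F := by rw [hFC] at hanti ⊢; rwa [C_comp] at hanti
    have hF0 : F = 0 := add_self_eq_zero.mp (eq_neg_iff_add_eq_zero.mp h1)
    rw [hF0]; exact Submodule.zero_mem _
  | succ d ih =>
    intro F hd hdm hanti
    by_cases hF : F = 0
    · rw [hF]; exact Submodule.zero_mem _
    by_cases hd' : F.natDegree ≤ d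
    · exact ih F hd' hdm hanti
    have hdeq : F.natDegree = d + 1 := le_antisymm hd (by omega)
    obtain ⟨j, hj⟩ := anti_odd K F hF hanti
    have hjm : j < m := by omega
    set a : ℚ := F.leadingCoeff / (wp K j).leadingCoeff with ha
    set G : ℚ[X] := F - C a * (wp K j) with hG
    have hwne : wp K j ≠ 0 := leadingCoeff_ne_zero.mp (wp_leadingCoeff_ne K j)
    have hane : a ≠ 0 := div_ne_zero (leadingCoeff_ne_zero.mpr hF) (wp_leadingCoeff_ne K j)
    have hmul_ne : C a * wp K j ≠ 0 := mul_ne_zero (C_ne_zero.mpr hane) hwne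
    have hnd2 : (C a * wp K j).natDegree = F.natDegree := by
      rw [natDegree_C_mul hane, wp_natDegree]; omega
    have hlc2 : (C a * wp K j).leadingCoeff = F.leadingCoeff := by
      rw [leadingCoeff_mul, leadingCoeff_C, ha,
        div_mul_cancel₀ _ (wp_leadingCoeff_ne K j)]
    have hGanti : G.comp (C K - X) = -G := by
      rw [hG, sub_comp, mul_comp, C_comp, hanti, wp_comp]
      ring
    have hGd : G.natDegree ≤ d := by
      by_cases hG0 : G = 0
      · simp [hG0]
      have := natDegree_lt_natDegree hG0 (by
        refine degree_sub_lt ?_ hF hlc2.symm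
        rw [degree_eq_natDegree hF, degree_eq_natDegree hmul_ne, hnd2])
      omega
    have hGmem := ih G hGd (by omega) hGanti
    have hwmem : wp K j ∈ Submodule.span ℚ (Set.range fun j : Fin m => wp K j) :=
      Submodule.subset_span ⟨⟨j, hjm⟩, rfl⟩
    have : F = G + a • wp K j := by rw [hG, smul_eq_C_mul]; ring
    rw [this]
    exact Submodule.add_mem _ hGmem (Submodule.smul_mem _ a hwmem)

/-- **Lemma (bottleneck: columns are dependent).**
Let `n ≥ 1` and let `B = {b_1 < ⋯ < b_{n+1}} ⊆ {1,…,2n+1}` (here `b` is the strictly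
increasing enumeration, 0-indexed, so `b k` is `b_{k+1}`).  If `b_k ≥ 2k` for some
`1 ≤ k ≤ n+1` (0-indexed: `b k ≥ 2k+2`), then the columns of `M_{2n}` labeled by `B`,
viewed as vectors in `ℚ^{n+1}`, are linearly dependent. -/
theorem dsEven_columns_dependent (n : ℕ) (hn : 1 ≤ n)
    (b : Fin (n + 1) → ℕ) (hmono : StrictMono b)
    (hlb : ∀ k, 1 ≤ b k) (hub : ∀ k, b k ≤ 2 * n + 1)
    (hbig : ∃ k : Fin (n + 1), 2 * (k : ℕ) + 2 ≤ b k) :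
    ¬ LinearIndependent ℚ (fun k : Fin (n + 1) => fun i : Fin (n + 1) =>
        ((Nat.choose (2 * n + 1 - (i : ℕ)) (2 * n + 2 - b k) : ℚ)
          - (Nat.choose (i : ℕ) (2 * n + 2 - b k) : ℚ))) := by
  intro h
  obtain ⟨k0, hk0⟩ := hbig
  have hub0 := hub k0
  set K0 : ℕ := (k0 : ℕ) with hK0def
  have hK0 : K0 + 1 ≤ n := by omega
  set m : ℕ := n - K0 with hm
  set K : ℚ := ((2 * n + 1 : ℕ) : ℚ) with hK
  set E : ℚ[X] →ₗ[ℚ] (Fin (n + 1) → ℚ) :=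
    LinearMap.pi fun i : Fin (n + 1) => Polynomial.leval ((i : ℕ) : ℚ) with hE
  set W : Submodule ℚ (Fin (n + 1) → ℚ) :=
    Submodule.span ℚ (Set.range fun j : Fin m => E (wp K j)) with hW
  set ι : Fin (m + 1) → Fin (n + 1) := fun t => ⟨K0 + (t : ℕ), by
    have := t.isLt; omega⟩ with hι
  have hinj : Function.Injective ι := by
    intro s t hst
    have := congrArg Fin.val hst
    simp only [hι] at this
    exact Fin.ext (by omega)
  have h2 := h.comp ι hinj
  have hmem : ∀ t : Fin (m + 1),
      (fun i : Fin (n + 1) =>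
        ((Nat.choose (2 * n + 1 - (i : ℕ)) (2 * n + 2 - b (ι t)) : ℚ)
          - (Nat.choose (i : ℕ) (2 * n + 2 - b (ι t)) : ℚ))) ∈ W := by
    intro t
    set c : ℕ := 2 * n + 2 - b (ι t) with hc
    have hble : b k0 ≤ b (ι t) := by
      refine hmono.monotone ?_
      rw [Fin.le_def]
      simp only [hι]
      omega
    have hubt := hub (ι t)
    have hc2 : c ≤ 2 * m := by omega
    set F : ℚ[X] := (chQ c).comp (C K - X) - chQ c with hF
    have hveq : (fun i : Fin (n + 1) =>
        ((Nat.choose (2 * n + 1 - (i : ℕ)) c : ℚ) - (Nat.choose (i : ℕ) c : ℚ))) = E F := by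
      funext i
      have hi := i.isLt
      have hcast : K - ((i : ℕ) : ℚ) = ((2 * n + 1 - (i : ℕ) : ℕ) : ℚ) := by
        rw [Nat.cast_sub (by omega)]
      simp only [hE, hF, LinearMap.pi_apply, leval_apply, eval_sub, eval_comp, eval_C, eval_X,
        hcast, chQ_eval_nat]
    rw [hveq]
    have hFdeg : F.natDegree ≤ 2 * m := by
      refine (natDegree_sub_le _ _).trans ?_
      refine max_le ?_ ((chQ_natDegree_le c).trans hc2)
      refine (natDegree_comp_le).trans ?_
      rw [nd_CK_sub_X, mul_one]
      exact (chQ_natDegree_le c).trans hc2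
    have hcomp2 : ((C K - X : ℚ[X])).comp (C K - X) = X := by
      rw [sub_comp, C_comp, X_comp, sub_sub_cancel]
    have hFanti : F.comp (C K - X) = -F := by
      rw [hF, sub_comp, comp_assoc, hcomp2, comp_X]
      ring
    have hFmem := mem_span_wp K m (2 * m) F hFdeg hFdeg hFanti
    have : E F ∈ Submodule.map E (Submodule.span ℚ (Set.range fun j : Fin m => wp K j)) :=
      ⟨F, hFmem, rfl⟩
    rwa [Submodule.map_span, ← Set.range_comp] at this
  haveI : FiniteDimensional ℚ W := FiniteDimensional.span_of_finite ℚ (Set.finite_range _)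
  set vW : Fin (m + 1) → W := fun t => ⟨_, hmem t⟩ with hvW
  have hli : LinearIndependent ℚ vW := by
    apply LinearIndependent.of_comp W.subtype
    exact h2
  have hcard : m + 1 ≤ Module.finrank ℚ W := by
    simpa using hli.fintype_card_le_finrank
  have hbound : Module.finrank ℚ W ≤ m := by
    have := finrank_range_le_card (R := ℚ) (b := fun j : Fin m => E (wp K j))
    simpa [Set.finrank] using this
  omega
end

section
/- For every n ≥ 0, the (n+1)×(n+1) submatrix of M_{2n} on the columns labeled 1, 2, ..., n+1 (entry in row i and column labeled j, for 0 ≤ i ≤ n and 1 ≤ j ≤ n+1, equal to C(2n+1-i, 2n+2-j) - C(i, 2n+2-j)) is upper triangular with all diagonal entries equal to 1; in particular its determinant equals 1, so {1, 2, ..., n+1} is a basis of the Dehn–Sommerville matroid DS_{2n} and the matrix M_{2n} has full row rank n+1. -/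
lemma ds_rank_submatrix_cols_le {m k l : ℕ} (A : Matrix (Fin m) (Fin k) ℚ)
    (g : Fin l → Fin k) : (A.submatrix id g).rank ≤ A.rank := by
  rw [Matrix.rank_eq_finrank_span_cols, Matrix.rank_eq_finrank_span_cols]
  apply Submodule.finrank_mono
  apply Submodule.span_mono
  rintro _ ⟨j, rfl⟩
  exact ⟨g j, rfl⟩

/-- **Lemma (initial columns form a basis).**
For every `n ≥ 0`, the `(n+1)×(n+1)` submatrix of the Dehn–Sommerville matrix `M_{2n}`
on the columns labeled `1,…,n+1` (entry in row `i`, column labeled `j+1` for `j : Fin (n+1)`: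
`C(2n+1-i, 2n+2-(j+1)) - C(i, 2n+2-(j+1))`) is upper triangular with all diagonal entries
equal to `1`; in particular its determinant is `1`, so `{1,…,n+1}` is a basis of the
Dehn–Sommerville matroid `DS_{2n}`, and the full matrix `M_{2n}` has row rank `n+1`. -/
theorem dsEven_initial_submatrix (n : ℕ) :
    (∀ i j : Fin (n + 1), (j : ℕ) < (i : ℕ) →
        ((Nat.choose (2 * n + 1 - (i : ℕ)) (2 * n + 2 - ((j : ℕ) + 1)) : ℤ)
          - (Nat.choose (i : ℕ) (2 * n + 2 - ((j : ℕ) + 1)) : ℤ)) = 0)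
    ∧ (∀ i : Fin (n + 1),
        ((Nat.choose (2 * n + 1 - (i : ℕ)) (2 * n + 2 - ((i : ℕ) + 1)) : ℤ)
          - (Nat.choose (i : ℕ) (2 * n + 2 - ((i : ℕ) + 1)) : ℤ)) = 1)
    ∧ Matrix.det (fun i j : Fin (n + 1) =>
        ((Nat.choose (2 * n + 1 - (i : ℕ)) (2 * n + 2 - ((j : ℕ) + 1)) : ℤ)
          - (Nat.choose (i : ℕ) (2 * n + 2 - ((j : ℕ) + 1)) : ℤ))) = 1
    ∧ Matrix.rank (Matrix.of fun (i : Fin (n + 1)) (j : Fin (2 * n + 1)) =>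
        ((Nat.choose (2 * n + 1 - (i : ℕ)) (2 * n + 2 - ((j : ℕ) + 1)) : ℚ)
          - (Nat.choose (i : ℕ) (2 * n + 2 - ((j : ℕ) + 1)) : ℚ))) = n + 1 := by
  have key0 : ∀ i j : ℕ, i ≤ n → j < i →
      Nat.choose (2 * n + 1 - i) (2 * n + 2 - (j + 1)) = 0 ∧
      Nat.choose i (2 * n + 2 - (j + 1)) = 0 := by
    intro i j hi hj
    constructor <;> (apply Nat.choose_eq_zero_of_lt; omega)
  have key1 : ∀ i : ℕ, i ≤ n →
      Nat.choose (2 * n + 1 - i) (2 * n + 2 - (i + 1)) = 1 ∧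
      Nat.choose i (2 * n + 2 - (i + 1)) = 0 := by
    intro i hi
    constructor
    · have : 2 * n + 2 - (i + 1) = 2 * n + 1 - i := by omega
      rw [this, Nat.choose_self]
    · apply Nat.choose_eq_zero_of_lt; omega
  have h0 : ∀ i j : Fin (n + 1), (j : ℕ) < (i : ℕ) →
      ((Nat.choose (2 * n + 1 - (i : ℕ)) (2 * n + 2 - ((j : ℕ) + 1)) : ℤ)
        - (Nat.choose (i : ℕ) (2 * n + 2 - ((j : ℕ) + 1)) : ℤ)) = 0 := by
    intro i j hij
    obtain ⟨h1, h2⟩ := key0 i j (Nat.lt_succ_iff.mp i.isLt) hij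
    rw [h1, h2]; simp
  have h1 : ∀ i : Fin (n + 1),
      ((Nat.choose (2 * n + 1 - (i : ℕ)) (2 * n + 2 - ((i : ℕ) + 1)) : ℤ)
        - (Nat.choose (i : ℕ) (2 * n + 2 - ((i : ℕ) + 1)) : ℤ)) = 1 := by
    intro i
    obtain ⟨h1, h2⟩ := key1 i (Nat.lt_succ_iff.mp i.isLt)
    rw [h1, h2]; simp
  have hdet : Matrix.det (fun i j : Fin (n + 1) =>
      ((Nat.choose (2 * n + 1 - (i : ℕ)) (2 * n + 2 - ((j : ℕ) + 1)) : ℤ)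
        - (Nat.choose (i : ℕ) (2 * n + 2 - ((j : ℕ) + 1)) : ℤ))) = 1 := by
    rw [Matrix.det_of_upperTriangular (fun i j hij => h0 i j hij)]
    simp only [h1, Finset.prod_const_one]
  refine ⟨h0, h1, hdet, ?_⟩
  set A : Matrix (Fin (n + 1)) (Fin (2 * n + 1)) ℚ :=
    Matrix.of fun (i : Fin (n + 1)) (j : Fin (2 * n + 1)) =>
      ((Nat.choose (2 * n + 1 - (i : ℕ)) (2 * n + 2 - ((j : ℕ) + 1)) : ℚ)
        - (Nat.choose (i : ℕ) (2 * n + 2 - ((j : ℕ) + 1)) : ℚ)) with hA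
  set S : Matrix (Fin (n + 1)) (Fin (n + 1)) ℚ :=
    fun i j : Fin (n + 1) =>
      ((Nat.choose (2 * n + 1 - (i : ℕ)) (2 * n + 2 - ((j : ℕ) + 1)) : ℚ)
        - (Nat.choose (i : ℕ) (2 * n + 2 - ((j : ℕ) + 1)) : ℚ)) with hS
  have hdetS : S.det = 1 := by
    rw [Matrix.det_of_upperTriangular]
    · have : ∀ i : Fin (n + 1), S i i = 1 := by
        intro i
        obtain ⟨h1, h2⟩ := key1 i (Nat.lt_succ_iff.mp i.isLt)
        simp only [hS, h1, h2]; simp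
      simp only [this, Finset.prod_const_one]
    · intro i j hij
      obtain ⟨h1, h2⟩ := key0 i j (Nat.lt_succ_iff.mp i.isLt) hij
      simp only [hS, h1, h2]; simp
  have hrankS : S.rank = n + 1 := by
    rw [Matrix.rank_of_isUnit]
    · simp
    · rw [Matrix.isUnit_iff_isUnit_det, hdetS]; exact isUnit_one
  have hle : A.rank ≤ n + 1 := by
    have := Matrix.rank_le_card_height A
    simpa using this
  have hcast : n + 1 ≤ 2 * n + 1 := by omega
  have hSsub : S = A.submatrix id (Fin.castLE hcast) := by
    ext i j
    simp [hS, hA, Matrix.submatrix, Fin.castLE]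
  have hge : n + 1 ≤ A.rank := by
    have h := ds_rank_submatrix_cols_le A (Fin.castLE hcast)
    rw [← hSsub, hrankS] at h
    exact h
  omega
end
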